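/- (Miranda's theorem, n = 2) Let H = (H_1, H_2): [r,R]^2 → R^2 be continuous with H_1(r,s) > 0 and H_1(R,s) < 0 for all s ∈ [r,R], and H_2(t,r) > 0 and H_2(t,R) < 0 for all t ∈ [r,R]. Then there exists (t,s) ∈ [r,R]^2 with H(t,s) = (0,0). -/

import Mathlib

open Set

open Complex

set_option maxHeartbeats 1000000

/-- Two values of a continuous function whose sine never vanishes differ by less than π. -/
lemma lift_two_point {ψ : ℝ → ℝ} {a b : ℝ} (hψ : ContinuousOn ψ (Icc a b))
    (hs : ∀ x ∈ Icc a b, Real.sin (ψ x) ≠ 0) {x z : ℝ} (hx : x ∈ Icc a b) (hz : z ∈ Icc a b) :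
    ψ x - ψ z < Real.pi := by
  by_contra hcon
  push_neg at hcon
  have hπ := Real.pi_pos
  obtain ⟨c, h1, h2, hsc⟩ : ∃ c : ℝ, ψ z ≤ c ∧ c ≤ ψ z + Real.pi ∧ Real.sin c = 0 := by
    refine ⟨(⌈ψ z / Real.pi⌉ : ℝ) * Real.pi, ?_, ?_, ?_⟩
    · rw [← div_le_iff₀ hπ]
      exact Int.le_ceil _
    · have h4 : ((⌈ψ z / Real.pi⌉ : ℝ)) < ψ z / Real.pi + 1 := Int.ceil_lt_add_one (ψ z / Real.pi)
      have h5 : ψ z / Real.pi * Real.pi = ψ z := by field_simp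
      nlinarith
    · exact Real.sin_int_mul_pi _
  have hmem : c ∈ Icc (ψ z) (ψ x) := ⟨h1, by linarith⟩
  obtain ⟨w, hw, hwc⟩ : ∃ w ∈ Icc a b, ψ w = c := by
    rcases le_total z x with hzx | hzx
    · have hsub : Icc z x ⊆ Icc a b := Icc_subset_Icc hz.1 hx.2
      obtain ⟨w, hw, hwc⟩ := intermediate_value_Icc hzx (hψ.mono hsub) hmem
      exact ⟨w, hsub hw, hwc⟩
    · have hsub : Icc x z ⊆ Icc a b := Icc_subset_Icc hx.1 hz.2
      obtain ⟨w, hw, hwc⟩ := intermediate_value_Icc' hzx (hψ.mono hsub) hmem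
      exact ⟨w, hsub hw, hwc⟩
  exact hs w hw (by rw [hwc]; exact hsc)

/-- Edge monotonicity lemma: if sin∘ψ > 0 throughout and cos∘ψ goes from + to −,
then ψ increases between the endpoints. -/
lemma edge_mono {ψ : ℝ → ℝ} {a b : ℝ} (hψ : ContinuousOn ψ (Icc a b)) (hab : a ≤ b)
    (hs : ∀ x ∈ Icc a b, 0 < Real.sin (ψ x)) (h2 : 0 < Real.cos (ψ a))
    (h3 : Real.cos (ψ b) < 0) : ψ a < ψ b := by
  have ha : a ∈ Icc a b := ⟨le_rfl, hab⟩
  have hb : b ∈ Icc a b := ⟨hab, le_rfl⟩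
  by_contra hcon
  push_neg at hcon
  have hlt := lift_two_point hψ (fun x hx => (hs x hx).ne') ha hb
  set x := ψ b - ψ a with hx
  have hπ := Real.pi_pos
  have hsinx : Real.sin x ≤ 0 := by
    have h4 : 0 ≤ Real.sin (-x) :=
      Real.sin_nonneg_of_nonneg_of_le_pi (by simp [hx]; linarith) (by simp [hx]; linarith)
    rw [Real.sin_neg] at h4; linarith
  have hadd : ψ b = ψ a + x := by ring
  have hsb := hs b hb
  rw [hadd, Real.sin_add] at hsb
  rw [hadd, Real.cos_add] at h3
  have hsa := hs a ha
  rcases le_or_gt (Real.cos x) 0 with hcx | hcx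
  · nlinarith
  · nlinarith

/-- Telescoping product over a clamped grid. -/
lemma telescope {G : ℝ → ℂ} {u : ℕ → ℝ} (hmono : ∀ j, u j ≤ u (j + 1))
    (hG : ∀ j, G (u j) ≠ 0) (k : ℕ) (t : ℝ) (ht : u 0 ≤ t) :
    ∏ j ∈ Finset.range k, G (max (min t (u (j + 1))) (u j)) / G (u j)
      = G (min t (u k)) / G (u 0) := by
  induction k with
  | zero => simp [min_eq_right ht, div_self (hG 0)]
  | succ k ih =>
    rw [Finset.prod_range_succ, ih]
    rcases le_total t (u k) with hle | hle
    · have h2 : min t (u (k + 1)) = t := min_eq_left (hle.trans (hmono k))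
      have h3 : max (min t (u (k + 1))) (u k) = u k := by rw [h2]; exact max_eq_right hle
      rw [h3, min_eq_left hle, div_self (hG k), mul_one, h2]
    · have h1 : min t (u k) = u k := min_eq_right hle
      have h2 : max (min t (u (k + 1))) (u k) = min t (u (k + 1)) :=
        max_eq_left (le_min hle (hmono k))
      rw [h1, h2]
      field_simp [hG 0, hG k]

lemma contOn_arg {α : Type*} [TopologicalSpace α] {g : α → ℂ} {s : Set α}
    (hg : ContinuousOn g s) (h : ∀ x ∈ s, g x ∈ slitPlane) :
    ContinuousOn (fun x => (g x).arg) s :=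
  fun x hx => (Complex.continuousAt_arg (h x hx)).comp_continuousWithinAt (hg x hx)



lemma exp_arg_mul_I' {z : ℂ} (hz : z ≠ 0) : Complex.exp (z.arg * I) = z / ‖z‖ := by
  have h := Complex.norm_mul_exp_arg_mul_I z
  have ha : (‖z‖ : ℂ) ≠ 0 := Complex.ofReal_ne_zero.mpr (norm_ne_zero_iff.mpr hz)
  rw [eq_div_iff ha, mul_comm]
  exact h

lemma exp_sum_arg (S : Finset ℕ) (g : ℕ → ℂ) (hg : ∀ j ∈ S, g j ≠ 0) :
    Complex.exp ((∑ j ∈ S, (g j).arg : ℝ) * I)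
      = (∏ j ∈ S, g j) / ‖∏ j ∈ S, g j‖ := by
  have h1 : ((∑ j ∈ S, (g j).arg : ℝ) : ℂ) * I = ∑ j ∈ S, (((g j).arg : ℂ) * I) := by
    push_cast
    rw [Finset.sum_mul]
  rw [h1, Complex.exp_sum, Finset.prod_congr rfl fun j hj => exp_arg_mul_I' (hg j hj),
    Finset.prod_div_distrib]
  congr 1
  rw [← Complex.ofReal_prod, norm_prod]

/-- Miranda's theorem in dimension 2: if `H = (H₁, H₂)` is continuous on the
square `[r,R]²`, with `H₁ > 0` on the face `{r} × [r,R]`, `H₁ < 0` on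
`{R} × [r,R]`, `H₂ > 0` on `[r,R] × {r}` and `H₂ < 0` on `[r,R] × {R}`,
then `H` vanishes somewhere in the square. -/
theorem stmt_11 (r R : ℝ) (hr : 0 < r) (hrR : r < R)
    (H₁ H₂ : ℝ × ℝ → ℝ)
    (hc : ContinuousOn (fun p => (H₁ p, H₂ p)) (Set.Icc r R ×ˢ Set.Icc r R))
    (h1r : ∀ s ∈ Set.Icc r R, 0 < H₁ (r, s))
    (h1R : ∀ s ∈ Set.Icc r R, H₁ (R, s) < 0)
    (h2r : ∀ t ∈ Set.Icc r R, 0 < H₂ (t, r))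
    (h2R : ∀ t ∈ Set.Icc r R, H₂ (t, R) < 0) :
    ∃ p ∈ Set.Icc r R ×ˢ Set.Icc r R, H₁ p = 0 ∧ H₂ p = 0 := by
  by_contra hcon
  push_neg at hcon
  set K : Set (ℝ × ℝ) := Set.Icc r R ×ˢ Set.Icc r R with hK
  have hrIcc : r ∈ Set.Icc r R := ⟨le_rfl, hrR.le⟩
  have hRIcc : R ∈ Set.Icc r R := ⟨hrR.le, le_rfl⟩
  have hmemK : ∀ x y : ℝ, x ∈ Set.Icc r R → y ∈ Set.Icc r R → (x, y) ∈ K :=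
    fun x y hx hy => Set.mk_mem_prod hx hy
  have hH1 : ContinuousOn H₁ K := continuous_fst.comp_continuousOn hc
  have hH2 : ContinuousOn H₂ K := continuous_snd.comp_continuousOn hc
  set f : ℝ × ℝ → ℂ := fun p => (H₁ p : ℂ) + (H₂ p : ℂ) * I with hfdef
  have hf : ContinuousOn f K :=
    (continuous_ofReal.comp_continuousOn hH1).add
      ((continuous_ofReal.comp_continuousOn hH2).mul continuousOn_const)
  have hre : ∀ p, (f p).re = H₁ p := fun p => by simp [hfdef]
  have him : ∀ p, (f p).im = H₂ p := fun p => by simp [hfdef]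
  have hne : ∀ p ∈ K, f p ≠ 0 := by
    intro p hp h0
    have h1 : H₁ p = 0 := by rw [← hre p, h0, Complex.zero_re]
    have h2 : H₂ p = 0 := by rw [← him p, h0, Complex.zero_im]
    exact hcon p hp h1 h2
  have hKc : IsCompact K := isCompact_Icc.prod isCompact_Icc
  have hrrK : (r, r) ∈ K := hmemK r r hrIcc hrIcc
  obtain ⟨p₀, hp₀K, hp₀⟩ :=
    hKc.exists_isMinOn ⟨(r, r), hrrK⟩ (continuous_norm.comp_continuousOn hf)
  set m := ‖f p₀‖ with hmdef
  have hm0 : 0 < m := norm_pos_iff.mpr (hne p₀ hp₀K)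
  have hm : ∀ p ∈ K, m ≤ ‖f p‖ := fun p hp => isMinOn_iff.mp hp₀ p hp
  obtain ⟨δ, hδ0, hδ⟩ :=
    Metric.uniformContinuousOn_iff.mp (hKc.uniformContinuousOn_of_continuous hf) m hm0
  obtain ⟨n, hn⟩ := exists_nat_gt ((R - r) / δ)
  have hRr : (0 : ℝ) < R - r := by linarith
  have hn0 : (0 : ℝ) < n := lt_trans (div_pos hRr hδ0) hn
  set h := (R - r) / n with hhdef
  have hh0 : 0 < h := div_pos hRr hn0
  have hhδ : h < δ := by
    rw [hhdef, div_lt_iff₀ hn0]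
    have h2 := (div_lt_iff₀ hδ0).mp hn
    nlinarith
  set u : ℕ → ℝ := fun j => r + ((min j n : ℕ) : ℝ) * h with hudef
  have humono : ∀ j, u j ≤ u (j + 1) := by
    intro j
    have : ((min j n : ℕ) : ℝ) ≤ ((min (j + 1) n : ℕ) : ℝ) := by
      exact_mod_cast min_le_min (Nat.le_succ j) (le_refl n)
    simp only [hudef]
    nlinarith
  have huK : ∀ j, u j ∈ Set.Icc r R := by
    intro j
    have h1 : (0 : ℝ) ≤ ((min j n : ℕ) : ℝ) := Nat.cast_nonneg _
    have h2 : ((min j n : ℕ) : ℝ) ≤ (n : ℝ) := by exact_mod_cast Nat.min_le_right j n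
    have h3 : (n : ℝ) * h = R - r := by
      rw [hhdef]; field_simp
    constructor
    · simp only [hudef]; nlinarith
    · simp only [hudef]; nlinarith
  have hu0 : u 0 = r := by simp [hudef]
  have hun : u n = R := by
    have h3 : (n : ℝ) * h = R - r := by rw [hhdef]; field_simp
    simp only [hudef, min_self]
    linarith
  have hustep : ∀ j, u (j + 1) - u j ≤ h := by
    intro j
    have h1 : ((min (j + 1) n : ℕ) : ℝ) ≤ ((min j n : ℕ) : ℝ) + 1 := by
      have : min (j + 1) n ≤ min j n + 1 := by omega
      exact_mod_cast this
    simp only [hudef]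
    nlinarith
  -- clamp facts
  have hclampK : ∀ (j : ℕ) (x : ℝ), x ∈ Set.Icc r R →
      max (min x (u (j + 1))) (u j) ∈ Set.Icc (u j) (u (j + 1)) := by
    intro j x hx
    constructor
    · exact le_max_right _ _
    · exact max_le (min_le_right _ _) (humono j)
  have hclampIcc : ∀ (j : ℕ) (x : ℝ), x ∈ Set.Icc r R →
      max (min x (u (j + 1))) (u j) ∈ Set.Icc r R := by
    intro j x hx
    obtain ⟨ha, hb⟩ := hclampK j x hx
    exact ⟨(huK j).1.trans ha, hb.trans (huK (j + 1)).2⟩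
  have hclampdist : ∀ (j : ℕ) (x : ℝ), x ∈ Set.Icc r R →
      |max (min x (u (j + 1))) (u j) - u j| < δ := by
    intro j x hx
    obtain ⟨ha, hb⟩ := hclampK j x hx
    rw [_root_.abs_of_nonneg (by linarith : (0:ℝ) ≤ max (min x (u (j+1))) (u j) - u j)]
    have := hustep j
    linarith
  -- ratios are in the slit plane
  have hslit : ∀ p ∈ K, ∀ q ∈ K, dist p q < δ → f p / f q ∈ slitPlane := by
    intro p hp q hq hpq
    have hq0 := hne q hq
    have habs : ‖f p / f q - 1‖ < 1 := by
      rw [div_sub_one hq0, norm_div, div_lt_one (norm_pos_iff.mpr hq0)]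
      calc ‖f p - f q‖ = dist (f p) (f q) := (Complex.dist_eq _ _).symm
        _ < m := hδ p hp q hq hpq
        _ ≤ ‖f q‖ := hm q hq
    refine Complex.mem_slitPlane_iff.mpr (Or.inl ?_)
    set w := f p / f q - 1 with hw
    have hwre : w.re = (f p / f q).re - 1 := by simp [hw]
    have h3 : w.re ^ 2 + w.im ^ 2 = (‖w‖) ^ 2 := by
      rw [Complex.sq_norm, Complex.normSq_apply]; ring
    nlinarith [norm_nonneg w, sq_nonneg w.im]
  have hratio_ne : ∀ p ∈ K, ∀ q ∈ K, dist p q < δ → f p / f q ≠ 0 :=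
    fun p hp q hq hpq => slitPlane_ne_zero (hslit p hp q hq hpq)
  -- distances between the relevant pairs of points
  have hdist1 : ∀ (j : ℕ) (x : ℝ), x ∈ Set.Icc r R →
      dist (max (min x (u (j + 1))) (u j), r) ((u j, r) : ℝ × ℝ) < δ := by
    intro j x hx
    rw [Prod.dist_eq]
    simp only [dist_self, Real.dist_eq]
    exact max_lt (hclampdist j x hx) hδ0
  have hdist2 : ∀ (j : ℕ) (t x : ℝ), x ∈ Set.Icc r R →
      dist (t, max (min x (u (j + 1))) (u j)) ((t, u j) : ℝ × ℝ) < δ := by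
    intro j t x hx
    rw [Prod.dist_eq]
    simp only [dist_self, Real.dist_eq]
    exact max_lt hδ0 (hclampdist j x hx)
  -- the argument function
  set θ : ℝ × ℝ → ℝ := fun p =>
    (f (r, r)).arg
      + (∑ j ∈ Finset.range n, (f (max (min p.1 (u (j + 1))) (u j), r) / f (u j, r)).arg)
      + ∑ j ∈ Finset.range n, (f (p.1, max (min p.2 (u (j + 1))) (u j)) / f (p.1, u j)).arg
    with hθdef
  have hθc : ContinuousOn θ K := by
    have c1 : ∀ j : ℕ, ContinuousOn
        (fun p : ℝ × ℝ => (f (max (min p.1 (u (j + 1))) (u j), r) / f (u j, r)).arg) K := by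
      intro j
      have hmap : Continuous (fun p : ℝ × ℝ => (max (min p.1 (u (j + 1))) (u j), r)) :=
        ((continuous_fst.min continuous_const).max continuous_const).prodMk continuous_const
      have hmt : Set.MapsTo (fun p : ℝ × ℝ => (max (min p.1 (u (j + 1))) (u j), r)) K K :=
        fun p hp => hmemK _ r (hclampIcc j p.1 (Set.mem_prod.mp hp).1) hrIcc
      have hcont : ContinuousOn (fun p : ℝ × ℝ => f (max (min p.1 (u (j + 1))) (u j), r)) K :=
        hf.comp hmap.continuousOn hmt
      refine contOn_arg (hcont.div_const _) ?_
      intro p hp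
      exact hslit _ (hmt hp) _ (hmemK _ r (huK j) hrIcc) (hdist1 j p.1 (Set.mem_prod.mp hp).1)
    have c2 : ∀ j : ℕ, ContinuousOn
        (fun p : ℝ × ℝ => (f (p.1, max (min p.2 (u (j + 1))) (u j)) / f (p.1, u j)).arg) K := by
      intro j
      have hmapA : Continuous (fun p : ℝ × ℝ => (p.1, max (min p.2 (u (j + 1))) (u j))) :=
        continuous_fst.prodMk ((continuous_snd.min continuous_const).max continuous_const)
      have hmtA : Set.MapsTo (fun p : ℝ × ℝ => (p.1, max (min p.2 (u (j + 1))) (u j))) K K :=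
        fun p hp => hmemK _ _ (Set.mem_prod.mp hp).1 (hclampIcc j p.2 (Set.mem_prod.mp hp).2)
      have hmapB : Continuous (fun p : ℝ × ℝ => (p.1, u j)) :=
        continuous_fst.prodMk continuous_const
      have hmtB : Set.MapsTo (fun p : ℝ × ℝ => (p.1, u j)) K K :=
        fun p hp => hmemK _ _ (Set.mem_prod.mp hp).1 (huK j)
      have hcontA := hf.comp hmapA.continuousOn hmtA
      have hcontB := hf.comp hmapB.continuousOn hmtB
      refine contOn_arg (hcontA.div hcontB fun p hp => hne _ (hmtB hp)) ?_
      intro p hp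
      exact hslit _ (hmtA hp) _ (hmtB hp) (hdist2 j p.1 p.2 (Set.mem_prod.mp hp).2)
    rw [hθdef]
    exact (continuousOn_const.add (continuousOn_finset_sum _ fun j _ => c1 j)).add
      (continuousOn_finset_sum _ fun j _ => c2 j)
  have hkey : ∀ p ∈ K, Complex.exp ((θ p : ℝ) * I) = f p / ‖f p‖ := by
    rintro ⟨t, s⟩ hp
    obtain ⟨ht, hs'⟩ := Set.mem_prod.mp hp
    have hG1 : ∀ j : ℕ, (fun x => f (x, r)) (u j) ≠ 0 := fun j => hne _ (hmemK _ r (huK j) hrIcc)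
    have htele1 : (∏ j ∈ Finset.range n, f (max (min t (u (j + 1))) (u j), r) / f (u j, r))
        = f (t, r) / f (r, r) := by
      have h5 := telescope (G := fun x => f (x, r)) (u := u) humono hG1 n t (by rw [hu0]; exact ht.1)
      rw [hun, min_eq_left ht.2, hu0] at h5
      exact h5
    have hG2 : ∀ j : ℕ, (fun y => f (t, y)) (u j) ≠ 0 := fun j => hne _ (hmemK t _ ht (huK j))
    have htele2 : (∏ j ∈ Finset.range n, f (t, max (min s (u (j + 1))) (u j)) / f (t, u j))
        = f (t, s) / f (t, r) := by
      have h5 := telescope (G := fun y => f (t, y)) (u := u) humono hG2 n s (by rw [hu0]; exact hs'.1)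
      rw [hun, min_eq_left hs'.2, hu0] at h5
      exact h5
    have hone : ∀ j ∈ Finset.range n,
        f (max (min t (u (j + 1))) (u j), r) / f (u j, r) ≠ 0 := fun j _ =>
      hratio_ne _ (hmemK _ r (hclampIcc j t ht) hrIcc) _ (hmemK _ r (huK j) hrIcc) (hdist1 j t ht)
    have htwo : ∀ j ∈ Finset.range n,
        f (t, max (min s (u (j + 1))) (u j)) / f (t, u j) ≠ 0 := fun j _ =>
      hratio_ne _ (hmemK t _ ht (hclampIcc j s hs')) _ (hmemK t _ ht (huK j)) (hdist2 j t s hs')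
    simp only [hθdef]
    rw [Complex.ofReal_add, Complex.ofReal_add, add_mul, add_mul, Complex.exp_add,
      Complex.exp_add]
    rw [exp_arg_mul_I' (hne _ hrrK), exp_sum_arg _ _ hone, exp_sum_arg _ _ htwo, htele1, htele2]
    have hz0 := hne _ hrrK
    have hz1 : f (t, r) ≠ 0 := hne _ (hmemK t r ht hrIcc)
    have hz2 : f (t, s) ≠ 0 := hne _ hp
    rw [norm_div, norm_div]
    have ha0 : (‖f (r, r)‖ : ℂ) ≠ 0 :=
      Complex.ofReal_ne_zero.mpr (norm_ne_zero_iff.mpr hz0)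
    have ha1 : (‖f (t, r)‖ : ℂ) ≠ 0 :=
      Complex.ofReal_ne_zero.mpr (norm_ne_zero_iff.mpr hz1)
    have ha2 : (‖f (t, s)‖ : ℂ) ≠ 0 :=
      Complex.ofReal_ne_zero.mpr (norm_ne_zero_iff.mpr hz2)
    push_cast
    field_simp
  have hcos : ∀ p ∈ K, Real.cos (θ p) = H₁ p / ‖f p‖ := by
    intro p hp
    have h1 := congrArg Complex.re (hkey p hp)
    rwa [Complex.exp_ofReal_mul_I_re, Complex.div_ofReal_re, hre] at h1
  have hsin : ∀ p ∈ K, Real.sin (θ p) = H₂ p / ‖f p‖ := by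
    intro p hp
    have h1 := congrArg Complex.im (hkey p hp)
    rwa [Complex.exp_ofReal_mul_I_im, Complex.div_ofReal_im, him] at h1
  have habspos : ∀ p ∈ K, 0 < ‖f p‖ := fun p hp => norm_pos_iff.mpr (hne p hp)
  -- bottom edge
  have hb1 : θ (r, r) < θ (R, r) := by
    have hψ : ContinuousOn (fun x => θ (x, r)) (Set.Icc r R) :=
      hθc.comp (continuous_id.prodMk continuous_const).continuousOn
        fun x hx => hmemK x r hx hrIcc
    exact edge_mono hψ hrR.le
      (fun x hx => by
        rw [hsin _ (hmemK x r hx hrIcc)]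
        exact div_pos (h2r x hx) (habspos _ (hmemK x r hx hrIcc)))
      (by rw [hcos _ hrrK]; exact div_pos (h1r r hrIcc) (habspos _ hrrK))
      (by rw [hcos _ (hmemK R r hRIcc hrIcc)]
          exact div_neg_of_neg_of_pos (h1R r hrIcc) (habspos _ (hmemK R r hRIcc hrIcc)))
  -- right edge
  have hb2 : θ (R, r) < θ (R, R) := by
    have hψ : ContinuousOn (fun x => θ (R, x) - Real.pi / 2) (Set.Icc r R) :=
      (hθc.comp (continuous_const.prodMk continuous_id).continuousOn
        fun x hx => hmemK R x hRIcc hx).sub continuousOn_const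
    have h4 := edge_mono hψ hrR.le
      (fun x hx => by
        rw [Real.sin_sub_pi_div_two, hcos _ (hmemK R x hRIcc hx)]
        have h5 := div_neg_of_neg_of_pos (h1R x hx) (habspos _ (hmemK R x hRIcc hx))
        linarith)
      (by rw [Real.cos_sub_pi_div_two, hsin _ (hmemK R r hRIcc hrIcc)]
          exact div_pos (h2r R hRIcc) (habspos _ (hmemK R r hRIcc hrIcc)))
      (by rw [Real.cos_sub_pi_div_two, hsin _ (hmemK R R hRIcc hRIcc)]
          exact div_neg_of_neg_of_pos (h2R R hRIcc) (habspos _ (hmemK R R hRIcc hRIcc)))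
    have h5 : θ (R, r) - Real.pi / 2 < θ (R, R) - Real.pi / 2 := h4
    exact (sub_lt_sub_iff_right (Real.pi / 2)).mp h5
  have hmaps3 : ∀ x ∈ Set.Icc r R, (R + r - x) ∈ Set.Icc r R := by
    intro x hx
    exact ⟨by linarith [hx.2], by linarith [hx.1]⟩
  have er : (R + r - r : ℝ) = R := by ring
  have eR : (R + r - R : ℝ) = r := by ring
  -- top edge
  have hb3 : θ (R, R) < θ (r, R) := by
    have hψ : ContinuousOn (fun x => θ (R + r - x, R) - Real.pi) (Set.Icc r R) :=
      (hθc.comp ((continuous_const.sub continuous_id).prodMk continuous_const).continuousOn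
        fun x hx => hmemK _ R (hmaps3 x hx) hRIcc).sub continuousOn_const
    have h4 := edge_mono hψ hrR.le
      (fun x hx => by
        rw [Real.sin_sub_pi, hsin _ (hmemK _ R (hmaps3 x hx) hRIcc)]
        have h5 := div_neg_of_neg_of_pos (h2R _ (hmaps3 x hx))
          (habspos _ (hmemK _ R (hmaps3 x hx) hRIcc))
        linarith)
      (by rw [er, Real.cos_sub_pi, hcos _ (hmemK R R hRIcc hRIcc)]
          have h5 := div_neg_of_neg_of_pos (h1R R hRIcc) (habspos _ (hmemK R R hRIcc hRIcc))
          linarith)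
      (by rw [eR, Real.cos_sub_pi, hcos _ (hmemK r R hrIcc hRIcc)]
          have h5 := div_pos (h1r R hRIcc) (habspos _ (hmemK r R hrIcc hRIcc))
          linarith)
    rw [er, eR] at h4
    linarith
  -- left edge
  have hb4 : θ (r, R) < θ (r, r) := by
    have hψ : ContinuousOn (fun x => θ (r, R + r - x) + Real.pi / 2) (Set.Icc r R) :=
      (hθc.comp (continuous_const.prodMk (continuous_const.sub continuous_id)).continuousOn
        fun x hx => hmemK r _ hrIcc (hmaps3 x hx)).add continuousOn_const
    have h4 := edge_mono hψ hrR.le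
      (fun x hx => by
        rw [Real.sin_add_pi_div_two, hcos _ (hmemK r _ hrIcc (hmaps3 x hx))]
        exact div_pos (h1r _ (hmaps3 x hx)) (habspos _ (hmemK r _ hrIcc (hmaps3 x hx))))
      (by rw [er, Real.cos_add_pi_div_two, hsin _ (hmemK r R hrIcc hRIcc)]
          have h5 := div_neg_of_neg_of_pos (h2R r hrIcc) (habspos _ (hmemK r R hrIcc hRIcc))
          linarith)
      (by rw [eR, Real.cos_add_pi_div_two, hsin _ hrrK]
          have h5 := div_pos (h2r r hrIcc) (habspos _ hrrK)
          linarith)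
    have h5 : θ (r, R + r - r) + Real.pi / 2 < θ (r, R + r - R) + Real.pi / 2 := h4
    rw [er, eR] at h5
    exact (add_lt_add_iff_right (Real.pi / 2)).mp h5
  linarith
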